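/- Under the equal-MSE constraint b₂² + s₂² = s₁² with 0 < s₂ < s₁ and critical value z ≥ z₀ where 2Φ(z₀) − 1 = 0.95 (i.e., z ≥ Φ⁻¹(0.975) ≈ 1.96), the coverage probability Φ((z s₁ − b₂)/s₂) − Φ((−z s₁ − b₂)/s₂) of the interval θ̂₂ ± z s₁ is strictly greater than 2Φ(z) − 1 whenever b₂ ≠ 0. -/

import Mathlib

open MeasureTheory ProbabilityTheory Real Filter Set

/-- Standard normal CDF. -/
noncomputable def Phi (x : ℝ) : ℝ := ((gaussianReal 0 1) (Set.Iic x)).toReal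

noncomputable def gg (x : ℝ) : ℝ := (Real.sqrt (2 * π))⁻¹ * Real.exp (-x ^ 2 / 2)

lemma gg_eq (x : ℝ) : gaussianPDFReal 0 1 x = gg x := by
  simp [gaussianPDFReal, gg]

lemma gg_fun_eq : gg = gaussianPDFReal 0 1 := by funext x; exact (gg_eq x).symm

lemma gg_pos (x : ℝ) : 0 < gg x := by
  have := Real.pi_pos
  unfold gg; positivity

lemma gg_cont : Continuous gg := by
  unfold gg; continuity

lemma gg_neg (x : ℝ) : gg (-x) = gg x := by simp [gg]

lemma gg_integrable : Integrable gg := by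
  rw [gg_fun_eq]; exact integrable_gaussianPDFReal 0 1

lemma Phi_eq (x : ℝ) : Phi x = ∫ t in Iic x, gg t := by
  rw [Phi, gaussianReal_apply_eq_integral 0 one_ne_zero, ENNReal.toReal_ofReal]
  · simp_rw [gg_eq]
  · exact setIntegral_nonneg measurableSet_Iic fun t _ => (gaussianPDFReal_nonneg 0 1 t)

lemma Phi_sub (a b : ℝ) : Phi b - Phi a = ∫ t in a..b, gg t := by
  rw [Phi_eq, Phi_eq,
    intervalIntegral.integral_Iic_sub_Iic gg_integrable.integrableOn gg_integrable.integrableOn]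

lemma hasDerivAt_Phi (x : ℝ) : HasDerivAt Phi (gg x) x := by
  have h : ∀ y, Phi 0 + ∫ t in (0:ℝ)..y, gg t = Phi y := by
    intro y; rw [← Phi_sub]; ring
  have H : HasDerivAt (fun y => Phi 0 + ∫ t in (0:ℝ)..y, gg t) (gg x) x :=
    HasDerivAt.const_add _ <|
      intervalIntegral.integral_hasDerivAt_right gg_integrable.intervalIntegrable
        gg_cont.aestronglyMeasurable.stronglyMeasurableAtFilter gg_cont.continuousAt
  simpa [funext h] using H

lemma Phi_lt_Phi {a b : ℝ} (h : a < b) : Phi a < Phi b := by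
  have : 0 < ∫ t in a..b, gg t :=
    intervalIntegral.intervalIntegral_pos_of_pos_on gg_integrable.intervalIntegrable
      (fun x _ => gg_pos x) h
  have hs := Phi_sub a b
  linarith

lemma Phi_neg (x : ℝ) : Phi (-x) = 1 - Phi x := by
  have h1 : (1:ℝ) = ∫ t, gg t := by
    rw [gg_fun_eq]; exact (integral_gaussianPDFReal_eq_one 0 one_ne_zero).symm
  have h2 : Phi (-x) = ∫ t in Ioi x, gg t := by
    rw [Phi_eq]
    have := integral_comp_neg_Iic (-x) gg
    simp only [neg_neg] at this
    rw [← this]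
    congr 1; funext t; exact (gg_neg t).symm
  have h3 : Phi x + ∫ t in Ioi x, gg t = ∫ t, gg t := by
    rw [Phi_eq]
    exact intervalIntegral.integral_Iic_add_Ioi gg_integrable.integrableOn gg_integrable.integrableOn
  rw [h2]; linarith

lemma psi_lemma {z x : ℝ} (hz : 3 ≤ z ^ 2) (hx0 : 0 < x) (hx1 : x < 1) :
    2 * x * z ^ 2 / (z ^ 2 - x ^ 2) < Real.log ((1 + x) / (1 - x)) := by
  set f : ℝ → ℝ := fun y => Real.log (1 + y) - Real.log (1 - y) - 2 * y * z ^ 2 / (z ^ 2 - y ^ 2)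
    with hf
  have hderiv : ∀ y ∈ Icc (0:ℝ) x, HasDerivAt f
      (1 / (1 + y) + 1 / (1 - y) - 2 * z ^ 2 * (z ^ 2 + y ^ 2) / (z ^ 2 - y ^ 2) ^ 2) y := by
    intro y hy
    have hy0 : 0 ≤ y := hy.1
    have hy1 : y < 1 := lt_of_le_of_lt hy.2 hx1
    have h1 : (1 + y) ≠ 0 := by nlinarith
    have h2 : (1 - y) ≠ 0 := by nlinarith
    have h3 : (z ^ 2 - y ^ 2) ≠ 0 := by nlinarith
    have d1 : HasDerivAt (fun y : ℝ => Real.log (1 + y)) (1 / (1 + y)) y := by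
      simpa using ((hasDerivAt_id y).const_add 1).log h1
    have d2 : HasDerivAt (fun y : ℝ => Real.log (1 - y)) (-(1 / (1 - y))) y := by
      have := ((hasDerivAt_id y).const_sub 1).log h2
      exact this.congr_deriv (by simp [neg_div])
    have d3 : HasDerivAt (fun y : ℝ => 2 * y * z ^ 2 / (z ^ 2 - y ^ 2))
        (2 * z ^ 2 * (z ^ 2 + y ^ 2) / (z ^ 2 - y ^ 2) ^ 2) y := by
      have dn : HasDerivAt (fun y : ℝ => 2 * y * z ^ 2) (2 * z ^ 2) y := by
        have heq : (fun y : ℝ => 2 * y * z ^ 2) = fun y => 2 * z ^ 2 * y := by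
          funext t; ring
        rw [heq]
        simpa using (hasDerivAt_id y).const_mul (2 * z ^ 2)
      have dd : HasDerivAt (fun y : ℝ => z ^ 2 - y ^ 2) (-(2 * y)) y := by
        simpa using ((hasDerivAt_pow 2 y)).const_sub (z ^ 2)
      have := dn.div dd h3
      exact this.congr_deriv (by field_simp; ring)
    exact ((d1.sub d2).sub d3).congr_deriv (by ring)
  have hmono : StrictMonoOn f (Icc 0 x) := by
    apply strictMonoOn_of_deriv_pos (convex_Icc 0 x)
    · exact ContinuousOn.congr (HasDerivAt.continuousOn hderiv) (fun y hy => rfl)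
    · intro y hy
      rw [interior_Icc] at hy
      rw [((hderiv y ⟨hy.1.le, hy.2.le⟩).deriv)]
      have hy0 : 0 < y := hy.1
      have hy1 : y < x := hy.2
      have hy1' : y < 1 := hy1.trans hx1
      have h1 : (0:ℝ) < 1 + y := by linarith
      have h2 : (0:ℝ) < 1 - y := by linarith
      have h3 : (0:ℝ) < z ^ 2 - y ^ 2 := by nlinarith
      rw [div_add_div _ _ (ne_of_gt h1) (ne_of_gt h2), sub_pos, div_lt_div_iff₀ (by positivity)
        (by positivity)]
      nlinarith [sq_nonneg y, sq_nonneg (y*z), sq_nonneg (z^2 - 3), mul_pos (mul_pos hy0 hy0) h3,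
        sq_nonneg (y^2)]
  have h0 : f 0 = 0 := by simp [hf]
  have hfx : 0 < f x := by
    have := hmono (left_mem_Icc.2 hx0.le) (right_mem_Icc.2 hx0.le) hx0
    rwa [h0] at this
  have : 0 < Real.log ((1 + x) / (1 - x)) - 2 * x * z ^ 2 / (z ^ 2 - x ^ 2) := by
    have hlog : Real.log ((1 + x) / (1 - x)) = Real.log (1 + x) - Real.log (1 - x) :=
      Real.log_div (by linarith) (by linarith)
    rw [hlog]
    simpa [hf] using hfx
  linarith

lemma key_pos {z t : ℝ} (hz : Real.sqrt 3 < z) (ht : 0 < t) :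
    0 < gg (z * Real.sqrt (1 + t ^ 2) - t) * (z * t / Real.sqrt (1 + t ^ 2) - 1)
      + gg (z * Real.sqrt (1 + t ^ 2) + t) * (z * t / Real.sqrt (1 + t ^ 2) + 1) := by
  set r := Real.sqrt (1 + t ^ 2) with hrdef
  have hr : 0 < r := Real.sqrt_pos.2 (by positivity)
  have hr2 : r ^ 2 = 1 + t ^ 2 := Real.sq_sqrt (by positivity)
  have hz0 : 0 < z := lt_of_le_of_lt (Real.sqrt_nonneg 3) hz
  have hz3 : 3 < z ^ 2 := by
    have : Real.sqrt 3 ^ 2 < z ^ 2 := by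
      apply pow_lt_pow_left₀ hz (Real.sqrt_nonneg 3)
      norm_num
    rwa [Real.sq_sqrt (by norm_num : (0:ℝ) ≤ 3)] at this
  -- main claim after multiplying by r
  have main : 0 < gg (z * r - t) * (z * t - r) + gg (z * r + t) * (z * t + r) := by
    rcases le_or_gt r (z * t) with hcase | hcase
    · have h1 : 0 ≤ gg (z * r - t) * (z * t - r) :=
        mul_nonneg (gg_pos _).le (by linarith)
      have h2 : 0 < gg (z * r + t) * (z * t + r) :=
        mul_pos (gg_pos _) (by nlinarith)
      linarith
    · -- need gg(w)*(zt+r) > gg(u)*(r - zt)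
      set x := z * t / r with hxdef
      have hx0 : 0 < x := by positivity
      have hx1 : x < 1 := (div_lt_one hr).2 hcase
      have hzx : z ^ 2 - x ^ 2 = z ^ 2 / r ^ 2 := by
        rw [hxdef]
        field_simp
        nlinarith [hr2, hr]
      have hrat : 2 * x * z ^ 2 / (z ^ 2 - x ^ 2) = 2 * z * r * t := by
        rw [hzx, hxdef]
        field_simp
      have hfrac : (1 + x) / (1 - x) = (r + z * t) / (r - z * t) := by
        rw [hxdef]
        rw [div_eq_div_iff (by nlinarith [hcase]) (by nlinarith [hcase])]
        field_simp
      have hlog := psi_lemma hz3.le hx0 hx1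
      rw [hrat, hfrac] at hlog
      have hpos : 0 < (r + z * t) / (r - z * t) := by
        apply div_pos <;> nlinarith
      have hexp : Real.exp (2 * z * r * t) < (r + z * t) / (r - z * t) := by
        calc Real.exp (2 * z * r * t) < Real.exp (Real.log ((r + z * t) / (r - z * t))) :=
              Real.exp_lt_exp.2 hlog
          _ = (r + z * t) / (r - z * t) := Real.exp_log hpos
      have hmul : (r - z * t) * Real.exp (2 * z * r * t) < r + z * t := by
        rw [mul_comm]
        exact (lt_div_iff₀ (by linarith)).1 hexp
      -- gg (z*r - t) = gg (z*r + t) * exp (2*z*r*t)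
      have hgg : gg (z * r - t) = gg (z * r + t) * Real.exp (2 * z * r * t) := by
        unfold gg
        rw [mul_assoc, ← Real.exp_add]
        congr 1
        ring
      have hexp0 : 0 < Real.exp (2 * z * r * t) := Real.exp_pos _
      have := gg_pos (z * r + t)
      nlinarith [hgg, hmul, mul_pos this hexp0]
  -- divide by r
  have expand : gg (z * r - t) * (z * t / r - 1) + gg (z * r + t) * (z * t / r + 1)
      = (gg (z * r - t) * (z * t - r) + gg (z * r + t) * (z * t + r)) / r := by
    field_simp
  rw [expand]
  positivity

lemma hasDerivAt_gg (x : ℝ) : HasDerivAt gg (-x * gg x) x := by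
  have h : HasDerivAt (fun x : ℝ => -x ^ 2 / 2) (-x) x := by
    have := ((hasDerivAt_pow 2 x).neg).div_const 2
    exact this.congr_deriv (by simp; ring)
  have h2 : HasDerivAt (fun x : ℝ => Real.exp (-x ^ 2 / 2))
      (Real.exp (-x ^ 2 / 2) * (-x)) x := h.exp
  have := h2.const_mul (Real.sqrt (2 * π))⁻¹
  exact this.congr_deriv (by unfold gg; ring)

lemma Phi_le_one (x : ℝ) : Phi x ≤ 1 := by
  rw [Phi]
  have h := prob_le_one (μ := gaussianReal 0 1) (s := Set.Iic x)
  exact ENNReal.toReal_le_of_le_ofReal one_pos.le (by simpa using h)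

set_option maxHeartbeats 1000000 in
lemma Phi_sqrt3_lt : Phi (Real.sqrt 3) < 39 / 40 := by
  set s := Real.sqrt 3 with hs
  have hs2 : s ^ 2 = 3 := Real.sq_sqrt (by norm_num)
  have hs_lb : 1.732 < s := by
    rw [hs, show (1.732:ℝ) = Real.sqrt (1.732 ^ 2) from (Real.sqrt_sq (by norm_num)).symm]
    apply Real.sqrt_lt_sqrt (by positivity)
    norm_num
  have hs_ub : s < 1.7321 := by
    rw [hs, show (1.7321:ℝ) = Real.sqrt (1.7321 ^ 2) from (Real.sqrt_sq (by norm_num)).symm]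
    apply Real.sqrt_lt_sqrt (by norm_num)
    norm_num
  have hs0 : 0 < s := by linarith
  have huicc : uIcc s (5/2 : ℝ) = Icc s (5/2 : ℝ) := uIcc_of_le (by linarith)
  -- FTC part
  set F : ℝ → ℝ := fun x => -gg x / x with hF
  have hFderiv : ∀ x ∈ uIcc s (5/2 : ℝ), HasDerivAt F (gg x * (1 + (x ^ 2)⁻¹)) x := by
    intro x hx
    rw [huicc] at hx
    have hxl : s ≤ x := hx.1
    have hx0 : x ≠ 0 := by nlinarith
    have := ((hasDerivAt_gg x).neg.div (hasDerivAt_id x) hx0)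
    exact this.congr_deriv (by simp only [id_eq, Pi.neg_apply]; field_simp; ring)
  have hcont : ContinuousOn (fun x : ℝ => gg x * (1 + (x ^ 2)⁻¹)) (uIcc s (5/2 : ℝ)) := by
    apply ContinuousOn.mul gg_cont.continuousOn
    apply ContinuousOn.add continuousOn_const
    apply ContinuousOn.inv₀ (by fun_prop)
    intro x hx
    rw [huicc] at hx
    have hxl : s ≤ x := hx.1
    nlinarith
  have hFTC : ∫ x in s..(5/2 : ℝ), gg x * (1 + (x ^ 2)⁻¹) = F (5/2) - F s :=
    intervalIntegral.integral_eq_sub_of_hasDerivAt hFderiv hcont.intervalIntegrable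
  -- compare integrals
  have hcmp : ∫ x in s..(5/2 : ℝ), (3/4 : ℝ) * (gg x * (1 + (x ^ 2)⁻¹))
      ≤ ∫ x in s..(5/2 : ℝ), gg x := by
    apply intervalIntegral.integral_mono_on (by linarith)
    · exact ((continuousOn_const.mul hcont)).intervalIntegrable
    · exact gg_integrable.intervalIntegrable
    · intro x hx
      have hxl : s ≤ x := hx.1
      have hx2 : 3 ≤ x ^ 2 := by nlinarith
      have hx2' : (0:ℝ) < x ^ 2 := by nlinarith
      have hgp := gg_pos x
      have h1 : (x ^ 2)⁻¹ * x ^ 2 = 1 := inv_mul_cancel₀ (ne_of_gt hx2')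
      have h2 : 0 < (x ^ 2)⁻¹ := by positivity
      have hinv : (x ^ 2)⁻¹ ≤ 1/3 := by nlinarith
      nlinarith
  have hcmp' : (3/4 : ℝ) * (F (5/2) - F s) ≤ ∫ x in s..(5/2 : ℝ), gg x := by
    rw [← hFTC, ← intervalIntegral.integral_const_mul]
    exact hcmp
  have hPhi_sub := Phi_sub s (5/2 : ℝ)
  have hPhi_le := Phi_le_one (5/2 : ℝ)
  -- numeric bounds
  have hpi_lb := Real.pi_gt_d6
  have hpi_ub := Real.pi_lt_d2
  have hc_lb : (2.5066 : ℝ) < Real.sqrt (2 * π) := by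
    rw [show (2.5066:ℝ) = Real.sqrt (2.5066 ^ 2) from (Real.sqrt_sq (by norm_num)).symm]
    apply Real.sqrt_lt_sqrt (by positivity)
    nlinarith
  have hc_ub : Real.sqrt (2 * π) < 2.51 := by
    rw [show (2.51:ℝ) = Real.sqrt (2.51 ^ 2) from (Real.sqrt_sq (by norm_num)).symm]
    apply Real.sqrt_lt_sqrt (by positivity)
    nlinarith
  have hsqrt2pi_pos : (0:ℝ) < Real.sqrt (2 * π) := by linarith
  have he1_lb := Real.exp_one_gt_d9
  have he1_ub := Real.exp_one_lt_d9
  have he1_pos : (0:ℝ) < Real.exp 1 := Real.exp_pos 1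
  have hexp3 : Real.exp 3 = (Real.exp 1) ^ 3 := by
    rw [← Real.exp_nat_mul]; norm_num
  have hexp3_ub : Real.exp 3 < 20.086 := by
    rw [hexp3]
    calc (Real.exp 1) ^ 3 < 2.7183 ^ 3 := by
          apply pow_lt_pow_left₀ (by linarith) he1_pos.le
          norm_num
      _ < 20.086 := by norm_num
  have hexp3_lb : (20.083:ℝ) < Real.exp 3 := by
    rw [hexp3]
    calc (20.083:ℝ) < 2.7182 ^ 3 := by norm_num
      _ < (Real.exp 1) ^ 3 := by
          apply pow_lt_pow_left₀ (by linarith) (by norm_num)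
          norm_num
  have hexp32 : (Real.exp (3/2)) ^ 2 = Real.exp 3 := by
    rw [← Real.exp_nat_mul]; norm_num
  have hexp32_pos : (0:ℝ) < Real.exp (3/2) := Real.exp_pos _
  have hexp32_ub : Real.exp (3/2) < 4.4819 := by nlinarith
  have hexpm32_lb : (0.2227 : ℝ) < Real.exp (-(3/2)) := by
    have h1 : Real.exp (-(3/2)) * Real.exp (3/2) = 1 := by
      rw [← Real.exp_add]; norm_num
    have h2 : (0:ℝ) < Real.exp (-(3/2)) := Real.exp_pos _
    nlinarith
  have hexpm258_ub : Real.exp (-(25/8)) < 0.0498 := by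
    have h1 : Real.exp (-(25/8)) ≤ Real.exp (-(3:ℝ)) := by
      apply Real.exp_le_exp.2; norm_num
    have h2 : Real.exp (-(3:ℝ)) * Real.exp 3 = 1 := by
      rw [← Real.exp_add]; norm_num
    have h3 : (0:ℝ) < Real.exp (-(3:ℝ)) := Real.exp_pos _
    nlinarith
  -- values of gg
  have hggs : gg s = (Real.sqrt (2 * π))⁻¹ * Real.exp (-(3/2)) := by
    rw [show gg s = (Real.sqrt (2 * π))⁻¹ * Real.exp (-s ^ 2 / 2) from rfl, hs2]
    norm_num
  have hgg52 : gg (5/2 : ℝ) = (Real.sqrt (2 * π))⁻¹ * Real.exp (-(25/8)) := by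
    rw [show gg (5/2:ℝ) = (Real.sqrt (2 * π))⁻¹ * Real.exp (-(5/2:ℝ) ^ 2 / 2) from rfl]
    norm_num
  have hcinv_lb : (0.3984 : ℝ) < (Real.sqrt (2 * π))⁻¹ := by
    have h1 : (Real.sqrt (2 * π))⁻¹ * Real.sqrt (2 * π) = 1 :=
      inv_mul_cancel₀ (ne_of_gt hsqrt2pi_pos)
    have h2 : (0:ℝ) < (Real.sqrt (2 * π))⁻¹ := by positivity
    nlinarith
  have hcinv_ub : (Real.sqrt (2 * π))⁻¹ < 0.399 := by
    have h1 : (Real.sqrt (2 * π))⁻¹ * Real.sqrt (2 * π) = 1 :=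
      inv_mul_cancel₀ (ne_of_gt hsqrt2pi_pos)
    have h2 : (0:ℝ) < (Real.sqrt (2 * π))⁻¹ := by positivity
    nlinarith
  have ha_lb : (0.0887 : ℝ) < gg s := by
    rw [hggs]; nlinarith
  have hb_ub : gg (5/2 : ℝ) < 0.0199 := by
    rw [hgg52]
    have h := Real.exp_pos (-(25/8 : ℝ))
    nlinarith
  have hFval : F (5/2) - F s = gg s / s - (2/5) * gg (5/2 : ℝ) := by
    rw [hF]
    simp only
    field_simp
    ring
  have hdiv_lb : (0.0512 : ℝ) < gg s / s := by
    rw [lt_div_iff₀ hs0]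
    nlinarith
  have hkey : (1/40 : ℝ) < Phi (5/2 : ℝ) - Phi s := by
    rw [hPhi_sub]
    rw [hFval] at hcmp'
    linarith
  linarith

lemma G_strictMono {z : ℝ} (hz : Real.sqrt 3 < z) :
    StrictMonoOn (fun t : ℝ => Phi (z * Real.sqrt (1 + t ^ 2) - t)
      - Phi (-(z * Real.sqrt (1 + t ^ 2)) - t)) (Ici 0) := by
  set G : ℝ → ℝ := fun t => Phi (z * Real.sqrt (1 + t ^ 2) - t)
      - Phi (-(z * Real.sqrt (1 + t ^ 2)) - t) with hG
  have hDG : ∀ t : ℝ, HasDerivAt G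
      (gg (z * Real.sqrt (1 + t ^ 2) - t) * (z * (t / Real.sqrt (1 + t ^ 2)) - 1)
        - gg (-(z * Real.sqrt (1 + t ^ 2)) - t) * (-(z * (t / Real.sqrt (1 + t ^ 2))) - 1)) t := by
    intro t
    have h1 : (0:ℝ) < 1 + t ^ 2 := by positivity
    have hr0 : 0 < Real.sqrt (1 + t ^ 2) := Real.sqrt_pos.2 h1
    have hsq : HasDerivAt (fun t : ℝ => Real.sqrt (1 + t ^ 2))
        (t / Real.sqrt (1 + t ^ 2)) t := by
      have hin : HasDerivAt (fun t : ℝ => 1 + t ^ 2) (2 * t) t := by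
        simpa using (hasDerivAt_pow 2 t).const_add 1
      have := (Real.hasDerivAt_sqrt (ne_of_gt h1)).comp t hin
      exact this.congr_deriv (by field_simp)
    have hu : HasDerivAt (fun t : ℝ => z * Real.sqrt (1 + t ^ 2) - t)
        (z * (t / Real.sqrt (1 + t ^ 2)) - 1) t :=
      (hsq.const_mul z).sub (hasDerivAt_id t)
    have hv : HasDerivAt (fun t : ℝ => -(z * Real.sqrt (1 + t ^ 2)) - t)
        (-(z * (t / Real.sqrt (1 + t ^ 2))) - 1) t :=
      ((hsq.const_mul z).neg).sub (hasDerivAt_id t)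
    exact ((hasDerivAt_Phi _).comp t hu).sub ((hasDerivAt_Phi _).comp t hv)
  apply strictMonoOn_of_deriv_pos (convex_Ici 0)
  · exact fun t _ => ((hDG t).continuousAt.continuousWithinAt)
  · intro t ht
    rw [interior_Ici] at ht
    rw [(hDG t).deriv]
    have hkey := key_pos hz ht
    have hvv : gg (-(z * Real.sqrt (1 + t ^ 2)) - t) = gg (z * Real.sqrt (1 + t ^ 2) + t) := by
      rw [show -(z * Real.sqrt (1 + t ^ 2)) - t = -(z * Real.sqrt (1 + t ^ 2) + t) by ring,
        gg_neg]
    rw [hvv]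
    have heq : z * (t / Real.sqrt (1 + t ^ 2)) = z * t / Real.sqrt (1 + t ^ 2) := by ring
    rw [heq]
    linarith [hkey]

theorem stmt13 (b₂ s₁ s₂ z z₀ : ℝ)
    (hs₂ : 0 < s₂) (hs₁ : s₂ < s₁) (hmse : b₂ ^ 2 + s₂ ^ 2 = s₁ ^ 2)
    (hz₀ : 2 * Phi z₀ - 1 = 0.95) (hz : z₀ ≤ z) (hb : b₂ ≠ 0) :
    Phi ((z * s₁ - b₂) / s₂) - Phi ((-(z * s₁) - b₂) / s₂) > 2 * Phi z - 1 := by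
  have hs₁0 : 0 < s₁ := lt_trans hs₂ hs₁
  -- z > sqrt 3
  have hPhiz₀ : Phi z₀ = 39 / 40 := by norm_num at hz₀ ⊢; linarith
  have hz₀3 : Real.sqrt 3 < z₀ := by
    by_contra h
    push_neg at h
    have : Phi z₀ ≤ Phi (Real.sqrt 3) := by
      rcases eq_or_lt_of_le h with heq | hlt
      · rw [heq]
      · exact (Phi_lt_Phi hlt).le
    have := Phi_sqrt3_lt
    linarith
  have hz3 : Real.sqrt 3 < z := lt_of_lt_of_le hz₀3 hz
  -- beta
  set β := |b₂| / s₂ with hβ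
  have hβ0 : 0 < β := div_pos (abs_pos.2 hb) hs₂
  have hsqβ : Real.sqrt (1 + β ^ 2) = s₁ / s₂ := by
    have h1 : 1 + β ^ 2 = (s₁ / s₂) ^ 2 := by
      rw [hβ, div_pow, div_pow, sq_abs]
      field_simp
      linarith [hmse]
    rw [h1, Real.sqrt_sq (by positivity)]
  have hmain := G_strictMono hz3 (self_mem_Ici (a := (0:ℝ)))
    (mem_Ici.2 hβ0.le) hβ0
  -- G 0 = 2 Phi z - 1
  have hG0 : Phi (z * Real.sqrt (1 + (0:ℝ) ^ 2) - 0) - Phi (-(z * Real.sqrt (1 + (0:ℝ) ^ 2)) - 0)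
      = 2 * Phi z - 1 := by
    norm_num [Phi_neg]
    ring
  -- G β equals target (for |b₂|)
  have hGβ : Phi (z * Real.sqrt (1 + β ^ 2) - β) - Phi (-(z * Real.sqrt (1 + β ^ 2)) - β)
      = Phi ((z * s₁ - |b₂|) / s₂) - Phi ((-(z * s₁) - |b₂|) / s₂) := by
    rw [hsqβ, hβ]
    congr 2 <;> field_simp <;> ring
  have habs : Phi ((z * s₁ - |b₂|) / s₂) - Phi ((-(z * s₁) - |b₂|) / s₂)
      = Phi ((z * s₁ - b₂) / s₂) - Phi ((-(z * s₁) - b₂) / s₂) := by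
    rcases abs_cases b₂ with ⟨h1, _⟩ | ⟨h1, _⟩
    · rw [h1]
    · rw [h1]
      have e1 : (z * s₁ - -b₂) / s₂ = -((-(z * s₁) - b₂) / s₂) := by field_simp; ring
      have e2 : (-(z * s₁) - -b₂) / s₂ = -((z * s₁ - b₂) / s₂) := by field_simp; ring
      rw [e1, e2, Phi_neg, Phi_neg]
      ring
  simp only at hmain
  rw [hG0, hGβ, habs] at hmain
  exact hmain
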